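/- arXiv:2508.10621 — 2 statements merged into one kernel-verified Lean document; each statement's English description precedes it below -/
import Mathlib

section
/- There exist constants C > 0 and ρ₀ ∈ (0,1) such that for all a, e ∈ (0,ρ₀): |f_{0,0}(a,e) + 1 + (1/4)·a²| ≤ C · a² · (e² + a); that is, f_{0,0}(a,e) = -1 - (1/4)·a²·(1 + O(e²; a)) for small a, e. -/
noncomputable section

/-- ρ(e,u) = 1 - e cos u -/
def rho (e u : ℝ) : ℝ := 1 - e * Real.cos u

/-- mean anomaly ℓ(e,u) = u - e sin u -/
def meanAnom (e u : ℝ) : ℝ := u - e * Real.sin u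

/-- E(e,u) = e^{if}, the exponential of the true anomaly -/
def trueExp (e u : ℝ) : ℂ :=
  (((Real.cos u - e : ℝ) : ℂ) + ((Real.sqrt (1 - e ^ 2) * Real.sin u : ℝ) : ℂ) * Complex.I) /
    ((1 - e * Real.cos u : ℝ) : ℂ)

/-- Hansen coefficient X^{n,m}_k(e) -/
def hansen (n m k : ℤ) (e : ℝ) : ℝ :=
  (1 / (2 * Real.pi)) * ∫ u in (0:ℝ)..(2 * Real.pi),
    rho e u ^ (n + 1) *
      (trueExp e u ^ m * Complex.exp (-(Complex.I * (k : ℂ) * ((meanAnom e u : ℝ) : ℂ)))).re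

/-- cos ψ where ψ = f + g -/
def cospsi (e u g : ℝ) : ℝ :=
  ((Real.cos u - e) / rho e u) * Real.cos g -
    (Real.sqrt (1 - e ^ 2) * Real.sin u / rho e u) * Real.sin g

/-- the PCR3BP perturbing function F(a,e,u,g) -/
def perturb (a e u g : ℝ) : ℝ :=
  a * rho e u * cospsi e u g -
    (Real.sqrt (1 + (a * rho e u) ^ 2 - 2 * (a * rho e u) * cospsi e u g))⁻¹

/-- Fourier coefficients f_{m,k}(a,e) of the perturbing function -/
def pcrFourier (m k : ℤ) (a e : ℝ) : ℝ :=
  if m = 0 ∧ k = 0 then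
    (1 / (4 * Real.pi ^ 2)) * ∫ g in (0:ℝ)..(2 * Real.pi), ∫ u in (0:ℝ)..(2 * Real.pi),
      perturb a e u g * rho e u
  else
    (1 / (2 * Real.pi ^ 2)) * ∫ g in (0:ℝ)..(2 * Real.pi), ∫ u in (0:ℝ)..(2 * Real.pi),
      perturb a e u g * Real.cos ((m : ℝ) * g + (k : ℝ) * meanAnom e u) * rho e u

/-- C_{n,m} -/
def Cnm (n m : ℕ) : ℝ :=
  ((Nat.factorial (n + m) : ℝ) * (Nat.factorial (n - m) : ℝ)) /
    (2 ^ (2 * n) * (Nat.factorial ((n + m) / 2) : ℝ) ^ 2 * (Nat.factorial ((n - m) / 2) : ℝ) ^ 2)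

open Real

/-! ### Auxiliary definitions and lemmas -/

/-- ρ cos ψ, a polynomial expression in the trig functions -/
def Wf (e u g : ℝ) : ℝ :=
  (Real.cos u - e) * Real.cos g - Real.sqrt (1 - e ^ 2) * Real.sin u * Real.sin g

/-- the quadratic (in a) part of the expansion of -F·ρ - ρ -/
def Qf (a e u g : ℝ) : ℝ := a ^ 2 / 2 * (3 * rho e u * Wf e u g ^ 2 - rho e u ^ 3)

lemma integral_trig_basis (c₀ c₁ c₂ c₃ d₁ d₂ d₃ k₁ k₂ : ℝ) :
    ∫ u in (0:ℝ)..(2 * π),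
      (c₀ + c₁ * Real.cos u + c₂ * Real.cos u ^ 2 + c₃ * Real.cos u ^ 3 +
        d₁ * Real.sin u + d₂ * (Real.sin u * Real.cos u) + d₃ * (Real.sin u * Real.cos u ^ 2) +
        k₁ * Real.sin u ^ 2 + k₂ * (Real.sin u ^ 2 * Real.cos u))
      = 2 * π * c₀ + π * c₂ + π * k₁ := by
  have key : ∀ u ∈ Set.uIcc (0:ℝ) (2 * π),
      HasDerivAt (fun u : ℝ => c₀ * u + c₁ * Real.sin u + c₂ * (u / 2 + Real.sin u * Real.cos u / 2)
        + c₃ * (Real.sin u - Real.sin u ^ 3 / 3) + d₁ * (-Real.cos u) + d₂ * (Real.sin u ^ 2 / 2)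
        + d₃ * (-(Real.cos u ^ 3) / 3) + k₁ * (u / 2 - Real.sin u * Real.cos u / 2)
        + k₂ * (Real.sin u ^ 3 / 3))
      (c₀ + c₁ * Real.cos u + c₂ * Real.cos u ^ 2 + c₃ * Real.cos u ^ 3 +
        d₁ * Real.sin u + d₂ * (Real.sin u * Real.cos u) + d₃ * (Real.sin u * Real.cos u ^ 2) +
        k₁ * Real.sin u ^ 2 + k₂ * (Real.sin u ^ 2 * Real.cos u)) u := by
    intro u _
    have hs := Real.hasDerivAt_sin u
    have hc := Real.hasDerivAt_cos u
    have hid := hasDerivAt_id u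
    have h1 : HasDerivAt (fun u : ℝ => c₀ * u) c₀ u := by
      simpa using (hid.const_mul c₀)
    have h2 : HasDerivAt (fun u : ℝ => c₁ * Real.sin u) (c₁ * Real.cos u) u := hs.const_mul c₁
    have h3 : HasDerivAt (fun u : ℝ => c₂ * (u / 2 + Real.sin u * Real.cos u / 2))
        (c₂ * (1 / 2 + (Real.cos u * Real.cos u + Real.sin u * (-Real.sin u)) / 2)) u := by
      exact (((hid.div_const 2).add ((hs.mul hc).div_const 2)).const_mul c₂)
    have h4 : HasDerivAt (fun u : ℝ => c₃ * (Real.sin u - Real.sin u ^ 3 / 3))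
        (c₃ * (Real.cos u - 3 * Real.sin u ^ 2 * Real.cos u / 3)) u := by
      exact ((hs.sub ((hs.pow 3).div_const 3)).const_mul c₃).congr_deriv (by ring)
    have h5 : HasDerivAt (fun u : ℝ => d₁ * (-Real.cos u)) (d₁ * Real.sin u) u := by
      simpa using (hc.neg.const_mul d₁)
    have h6 : HasDerivAt (fun u : ℝ => d₂ * (Real.sin u ^ 2 / 2))
        (d₂ * (2 * Real.sin u * Real.cos u / 2)) u := by
      exact (((hs.pow 2).div_const 2).const_mul d₂).congr_deriv (by ring)
    have h7 : HasDerivAt (fun u : ℝ => d₃ * (-(Real.cos u ^ 3) / 3))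
        (d₃ * (3 * Real.cos u ^ 2 * Real.sin u / 3)) u := by
      exact (((hc.pow 3).neg.div_const 3).const_mul d₃).congr_deriv (by ring)
    have h8 : HasDerivAt (fun u : ℝ => k₁ * (u / 2 - Real.sin u * Real.cos u / 2))
        (k₁ * (1 / 2 - (Real.cos u * Real.cos u + Real.sin u * (-Real.sin u)) / 2)) u := by
      exact (((hid.div_const 2).sub ((hs.mul hc).div_const 2)).const_mul k₁)
    have h9 : HasDerivAt (fun u : ℝ => k₂ * (Real.sin u ^ 3 / 3))
        (k₂ * (3 * Real.sin u ^ 2 * Real.cos u / 3)) u := by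
      exact (((hs.pow 3).div_const 3).const_mul k₂).congr_deriv (by ring)
    have := ((((((((h1.add h2).add h3).add h4).add h5).add h6).add h7).add h8).add h9)
    refine this.congr_deriv ?_
    have hpy := Real.sin_sq_add_cos_sq u
    linear_combination (-(c₂ / 2) - k₁ / 2 - c₃ * Real.cos u) * hpy
  have hint : IntervalIntegrable (fun u => c₀ + c₁ * Real.cos u + c₂ * Real.cos u ^ 2 +
      c₃ * Real.cos u ^ 3 + d₁ * Real.sin u + d₂ * (Real.sin u * Real.cos u) +
      d₃ * (Real.sin u * Real.cos u ^ 2) + k₁ * Real.sin u ^ 2 +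
      k₂ * (Real.sin u ^ 2 * Real.cos u)) MeasureTheory.volume 0 (2 * π) := by
    apply Continuous.intervalIntegrable; continuity
  rw [intervalIntegral.integral_eq_sub_of_hasDerivAt key hint]
  simp [Real.sin_two_pi, Real.cos_two_pi]
  ring

lemma central (s h : ℝ) (hs : |s| ≤ 1/2) (hpos : 0 < h) (hh : h ^ 2 * (1 - s) = 1) :
    |h - (1 + s/2 + 3*s^2/8)| ≤ 3 * |s| ^ 3 := by
  obtain ⟨hs1, hs2⟩ := abs_le.mp hs
  have hp : (3:ℝ)/4 ≤ 1 + s/2 + 3*s^2/8 := by nlinarith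
  have key : (h - (1 + s/2 + 3*s^2/8)) * ((h + (1 + s/2 + 3*s^2/8)) * (1 - s))
      = s ^ 3 * (5/8 + 15/64*s + 9/64*s^2) := by linear_combination hh
  have hq : |5/8 + 15/64*s + 9/64*s^2| ≤ 1 := by
    rw [abs_le]; constructor <;> nlinarith
  have hfac : (3:ℝ)/8 ≤ (h + (1 + s/2 + 3*s^2/8)) * (1 - s) := by nlinarith
  have habs : |h - (1 + s/2 + 3*s^2/8)| * ((h + (1 + s/2 + 3*s^2/8)) * (1 - s))
      = |s| ^ 3 * |5/8 + 15/64*s + 9/64*s^2| := by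
    rw [← abs_pow, ← abs_mul, ← key, abs_mul]
    rw [abs_of_nonneg (by linarith : (0:ℝ) ≤ (h + (1 + s/2 + 3*s^2/8)) * (1 - s))]
  have h1 : |h - (1 + s/2 + 3*s^2/8)| * (3/8) ≤ |s| ^ 3 * 1 := by
    calc |h - (1 + s/2 + 3*s^2/8)| * (3/8)
        ≤ |h - (1 + s/2 + 3*s^2/8)| * ((h + (1 + s/2 + 3*s^2/8)) * (1 - s)) := by
          apply mul_le_mul_of_nonneg_left hfac (abs_nonneg _)
      _ = |s| ^ 3 * |5/8 + 15/64*s + 9/64*s^2| := habs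
      _ ≤ |s| ^ 3 * 1 := by
          apply mul_le_mul_of_nonneg_left hq (by positivity)
  nlinarith [abs_nonneg (h - (1 + s/2 + 3*s^2/8))]

set_option maxHeartbeats 1000000 in
lemma quad_approx (r t h : ℝ) (hr : 0 ≤ r) (hr2 : r ≤ 9/64) (ht : |t| ≤ r)
    (hpos : 0 < h) (hh : h ^ 2 * (1 + r^2 - 2*t) = 1) :
    |(1 + t + (3*t^2 - r^2)/2) - h| ≤ 50 * r ^ 3 := by
  obtain ⟨ht1, ht2⟩ := abs_le.mp ht
  have hr3 : (0:ℝ) ≤ r^3 := pow_nonneg hr 3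
  have hr4 : r^4 ≤ (9/64) * r^3 := by
    nlinarith [mul_nonneg (mul_nonneg (mul_nonneg hr hr) hr) (sub_nonneg.mpr hr2)]
  have hr5 : r^5 ≤ (9/64) * r^4 := by
    nlinarith [mul_nonneg (mul_nonneg (mul_nonneg (mul_nonneg hr hr) hr) hr) (sub_nonneg.mpr hr2)]
  have hr6 : r^6 ≤ (9/64) * r^5 := by
    nlinarith [mul_nonneg (mul_nonneg (mul_nonneg (mul_nonneg (mul_nonneg hr hr) hr) hr) hr) (sub_nonneg.mpr hr2)]
  have hs : |2*t - r^2| ≤ 1/2 := by rw [abs_le]; constructor <;> nlinarith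
  have hc := central (2*t - r^2) h hs hpos (by linear_combination hh)
  have hsr : |2*t - r^2| ≤ 2*r + r^2 := by rw [abs_le]; constructor <;> nlinarith
  have hs3 : |2*t - r^2| ^ 3 ≤ 10 * r ^ 3 := by
    have h0 : (0:ℝ) ≤ |2*t - r^2| := abs_nonneg _
    have hcube : |2*t - r^2| ^ 3 ≤ (2*r + r^2)^3 := pow_le_pow_left₀ h0 hsr 3
    nlinarith [hcube, hr4, hr5, hr6]
  have htr : t * r^2 ≤ r^3 := by nlinarith [mul_le_mul_of_nonneg_right ht2 (sq_nonneg r)]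
  have htr' : -(r^3) ≤ t * r^2 := by nlinarith [mul_le_mul_of_nonneg_right ht1 (sq_nonneg r)]
  have hdiff : |(1 + t + (3*t^2 - r^2)/2) - (1 + (2*t - r^2)/2 + 3*(2*t - r^2)^2/8)|
      ≤ 2 * r ^ 3 := by
    have heq : (1 + t + (3*t^2 - r^2)/2) - (1 + (2*t - r^2)/2 + 3*(2*t - r^2)^2/8)
        = (3/2)*(t*r^2) - (3/8)*r^4 := by ring
    rw [heq, abs_le]
    refine ⟨by nlinarith [hr4, htr', hr3], by nlinarith [htr, pow_nonneg hr 4]⟩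
  calc |(1 + t + (3*t^2 - r^2)/2) - h|
      ≤ |(1 + t + (3*t^2 - r^2)/2) - (1 + (2*t - r^2)/2 + 3*(2*t - r^2)^2/8)|
        + |(1 + (2*t - r^2)/2 + 3*(2*t - r^2)^2/8) - h| := abs_sub_le _ _ _
    _ ≤ 2*r^3 + 3 * |2*t - r^2| ^ 3 := by
        rw [abs_sub_comm (1 + (2*t - r^2)/2 + 3*(2*t - r^2)^2/8) h]
        exact add_le_add hdiff hc
    _ ≤ 50 * r ^ 3 := by linarith [hs3, hr3]

lemma abs_le_of_sq (w ρ : ℝ) (hρ : 0 ≤ ρ) (h : w^2 ≤ ρ^2) : |w| ≤ ρ := by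
  nlinarith [abs_nonneg w, sq_abs w]

lemma Wbound (e u g : ℝ) (he0 : 0 < e) (he1 : e < 1) : |Wf e u g| ≤ rho e u := by
  have hB2 : Real.sqrt (1 - e ^ 2) ^ 2 = 1 - e ^ 2 := Real.sq_sqrt (by nlinarith)
  have hpyu := Real.sin_sq_add_cos_sq u
  have hpyg := Real.sin_sq_add_cos_sq g
  have hcu' := Real.cos_le_one u
  have hrpos : 0 ≤ rho e u := by rw [rho]; nlinarith
  have hXY : (Real.cos u - e)^2 + (Real.sqrt (1 - e^2) * Real.sin u)^2 = rho e u ^ 2 := by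
    rw [rho]
    linear_combination (Real.sin u)^2 * hB2 + (1 - e^2) * hpyu
  have key : Wf e u g ^ 2
      + ((Real.cos u - e) * Real.sin g + Real.sqrt (1 - e^2) * Real.sin u * Real.cos g)^2
      = rho e u ^ 2 := by
    rw [Wf]
    linear_combination ((Real.cos u - e)^2 + (Real.sqrt (1 - e^2) * Real.sin u)^2) * hpyg + hXY
  refine abs_le_of_sq _ _ hrpos ?_
  nlinarith [sq_nonneg ((Real.cos u - e) * Real.sin g + Real.sqrt (1 - e^2) * Real.sin u * Real.cos g)]

lemma sq55 (x : ℝ) (h : 55/64 ≤ x) : (55/64:ℝ)^2 ≤ x^2 := by nlinarith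

lemma finbound (a ρ x : ℝ) (ha : 0 < a) (h7 : 0 < ρ) (h9 : ρ < 9/8)
    (hx : x ≤ 50 * (a * ρ)^3) (hx0 : 0 ≤ x) : ρ * x ≤ 100 * a ^ 3 := by
  have h1 : ρ * x ≤ ρ * (50 * (a * ρ)^3) := by
    apply mul_le_mul_of_nonneg_left hx h7.le
  have h2 : ρ * (50 * (a * ρ)^3) = 50 * a^3 * ρ^4 := by ring
  have h3 : ρ^2 ≤ (81:ℝ)/64 := by nlinarith
  have h4 : ρ^4 ≤ 2 := by nlinarith [sq_nonneg ρ, sq_nonneg (ρ^2)]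
  have h5 : 50 * a^3 * ρ^4 ≤ 100 * a^3 := by
    nlinarith [mul_nonneg (pow_pos ha 3).le (by linarith : (0:ℝ) ≤ 2 - ρ^4)]
  linarith

set_option maxHeartbeats 1000000 in
lemma argpos (a e u g : ℝ) (ha0 : 0 < a) (ha1 : a < 1/8)
    (he0 : 0 < e) (he1 : e < 1/8) :
    0 < 1 + (a * rho e u) ^ 2 - 2 * (a * rho e u) * cospsi e u g := by
  have hcu := Real.neg_one_le_cos u
  have hcu' := Real.cos_le_one u
  have hrlo : 7/8 < rho e u := by rw [rho]; nlinarith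
  have hrhi : rho e u < 9/8 := by rw [rho]; nlinarith
  have hrpos : 0 < rho e u := by linarith
  have hrne : rho e u ≠ 0 := ne_of_gt hrpos
  have habsW : |Wf e u g| ≤ rho e u := Wbound e u g he0 (by linarith)
  have ht : |a * Wf e u g| ≤ a * rho e u := by
    rw [abs_mul, abs_of_pos ha0]
    exact mul_le_mul_of_nonneg_left habsW ha0.le
  obtain ⟨htl, htr⟩ := abs_le.mp ht
  have hr9 : a * rho e u ≤ 9/64 := by nlinarith
  have hcos : cospsi e u g = Wf e u g / rho e u := by
    rw [cospsi, Wf]; field_simp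
  have harg : 1 + (a * rho e u) ^ 2 - 2 * (a * rho e u) * cospsi e u g
      = 1 + (a * rho e u) ^ 2 - 2 * (a * Wf e u g) := by
    rw [hcos]; field_simp
  have h1r : (55:ℝ)/64 ≤ 1 - a * rho e u := by nlinarith
  have h1rsq : ((55:ℝ)/64)^2 ≤ (1 - a * rho e u)^2 := sq55 _ h1r
  have hident : 1 + (a * rho e u)^2 - 2*(a * Wf e u g)
      = (1 - a * rho e u)^2 + 2*(a * rho e u - a * Wf e u g) := by ring
  rw [harg, hident]; linarith

set_option maxHeartbeats 1000000 in
lemma pointwise_bound (a e u g : ℝ) (ha0 : 0 < a) (ha1 : a < 1/8)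
    (he0 : 0 < e) (he1 : e < 1/8) :
    |perturb a e u g * rho e u + rho e u + Qf a e u g| ≤ 100 * a ^ 3 := by
  have hcu := Real.neg_one_le_cos u
  have hcu' := Real.cos_le_one u
  have hrlo : 7/8 < rho e u := by rw [rho]; nlinarith
  have hrhi : rho e u < 9/8 := by rw [rho]; nlinarith
  have hrpos : 0 < rho e u := by linarith
  have hrne : rho e u ≠ 0 := ne_of_gt hrpos
  have habsW : |Wf e u g| ≤ rho e u := Wbound e u g he0 (by linarith)
  have ht : |a * Wf e u g| ≤ a * rho e u := by
    rw [abs_mul, abs_of_pos ha0]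
    exact mul_le_mul_of_nonneg_left habsW ha0.le
  obtain ⟨htl, htr⟩ := abs_le.mp ht
  have hr9 : a * rho e u ≤ 9/64 := by nlinarith
  have hcos : cospsi e u g = Wf e u g / rho e u := by
    rw [cospsi, Wf]; field_simp
  have harg : 1 + (a * rho e u) ^ 2 - 2 * (a * rho e u) * cospsi e u g
      = 1 + (a * rho e u) ^ 2 - 2 * (a * Wf e u g) := by
    rw [hcos]; field_simp
  have h1r : (55:ℝ)/64 ≤ 1 - a * rho e u := by nlinarith
  have h1rsq : ((55:ℝ)/64)^2 ≤ (1 - a * rho e u)^2 := sq55 _ h1r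
  have hident : 1 + (a * rho e u)^2 - 2*(a * Wf e u g)
      = (1 - a * rho e u)^2 + 2*(a * rho e u - a * Wf e u g) := by ring
  have hD : (1:ℝ)/2 ≤ 1 + (a * rho e u) ^ 2 - 2 * (a * Wf e u g) := by
    rw [hident]; linarith
  have hDpos : (0:ℝ) < 1 + (a * rho e u) ^ 2 - 2 * (a * Wf e u g) := by linarith
  have hsq : 0 < Real.sqrt (1 + (a * rho e u) ^ 2 - 2 * (a * Wf e u g)) :=
    Real.sqrt_pos.mpr hDpos
  set h := (Real.sqrt (1 + (a * rho e u) ^ 2 - 2 * (a * Wf e u g)))⁻¹ with hhdef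
  have hpos : 0 < h := inv_pos.mpr hsq
  have hh : h ^ 2 * (1 + (a * rho e u)^2 - 2*(a * Wf e u g)) = 1 := by
    rw [hhdef, inv_pow, Real.sq_sqrt hDpos.le]
    exact inv_mul_cancel₀ hDpos.ne'
  have hperturb : perturb a e u g = a * Wf e u g - h := by
    rw [perturb, harg, hcos, hhdef]; field_simp
  have hq := quad_approx (a * rho e u) (a * Wf e u g) h (by positivity) hr9 ht hpos
    (by linear_combination hh)
  have hfin : perturb a e u g * rho e u + rho e u + Qf a e u g
      = rho e u * ((1 + a * Wf e u g + (3*(a * Wf e u g)^2 - (a * rho e u)^2)/2) - h) := by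
    rw [hperturb, Qf]; ring
  rw [hfin, abs_mul, abs_of_pos hrpos]
  exact finbound a (rho e u) _ ha0 hrpos hrhi hq (abs_nonneg _)

lemma inner_val (a e g : ℝ) (he0 : 0 ≤ e) (he1 : e ≤ 1) :
    ∫ u in (0:ℝ)..(2*π), (rho e u + Qf a e u g)
      = 2*π + π*a^2/2*(1 - 6*e^2 + 15*e^2*Real.cos g^2) := by
  have hB2 : Real.sqrt (1 - e^2)^2 = 1 - e^2 := Real.sq_sqrt (by nlinarith)
  have hpyg := Real.sin_sq_add_cos_sq g
  have hcongr : Set.EqOn (fun u => rho e u + Qf a e u g)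
      (fun u => (1 + a^2/2*(3*Real.cos g^2*e^2 - 1))
        + (-e + a^2/2*(3*Real.cos g^2*(-2*e - e^3) + 3*e)) * Real.cos u
        + (a^2/2*(3*Real.cos g^2*(1 + 2*e^2) - 3*e^2)) * Real.cos u ^ 2
        + (a^2/2*(-3*Real.cos g^2*e + e^3)) * Real.cos u ^ 3
        + (a^2/2*(6*Real.sqrt (1-e^2)*Real.cos g*Real.sin g*e)) * Real.sin u
        + (a^2/2*(-6*Real.sqrt (1-e^2)*Real.cos g*Real.sin g*(1+e^2))) * (Real.sin u * Real.cos u)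
        + (a^2/2*(6*Real.sqrt (1-e^2)*Real.cos g*Real.sin g*e)) * (Real.sin u * Real.cos u ^ 2)
        + (a^2/2*(3*Real.sqrt (1-e^2)^2*Real.sin g^2)) * Real.sin u ^ 2
        + (a^2/2*(-3*Real.sqrt (1-e^2)^2*Real.sin g^2*e)) * (Real.sin u ^ 2 * Real.cos u))
      (Set.uIcc 0 (2*π)) := by
    intro u _
    simp only [rho, Qf, Wf]
    ring
  rw [intervalIntegral.integral_congr hcongr, integral_trig_basis]
  linear_combination (3*(π*a^2/2)*Real.sin g^2) * hB2 + (π*a^2/2*(3 - 3*e^2)) * hpyg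

lemma outer_val (a e : ℝ) :
    ∫ g in (0:ℝ)..(2*π), (2*π + π*a^2/2*(1 - 6*e^2 + 15*e^2*Real.cos g^2))
      = 4*π^2 + π^2*a^2*(1 + 3/2*e^2) := by
  have hcongr : Set.EqOn (fun g => 2*π + π*a^2/2*(1 - 6*e^2 + 15*e^2*Real.cos g^2))
      (fun g => (2*π + π*a^2/2*(1 - 6*e^2))
        + (0:ℝ) * Real.cos g
        + (π*a^2/2*(15*e^2)) * Real.cos g ^ 2
        + (0:ℝ) * Real.cos g ^ 3
        + (0:ℝ) * Real.sin g
        + (0:ℝ) * (Real.sin g * Real.cos g)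
        + (0:ℝ) * (Real.sin g * Real.cos g ^ 2)
        + (0:ℝ) * Real.sin g ^ 2
        + (0:ℝ) * (Real.sin g ^ 2 * Real.cos g))
      (Set.uIcc 0 (2*π)) := by
    intro g _; ring
  rw [intervalIntegral.integral_congr hcongr, integral_trig_basis]
  ring

/-- asymptotics of the mean Fourier coefficient
f_{0,0}(a,e) = -1 - (1/4) a² (1 + O(e²;a)) for small (a,e). -/
theorem fourier_coeff_zero_asymptotics :
    ∃ C > (0 : ℝ), ∃ ρ₀ ∈ Set.Ioo (0:ℝ) 1, ∀ a e : ℝ,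
      a ∈ Set.Ioo (0:ℝ) ρ₀ → e ∈ Set.Ioo (0:ℝ) ρ₀ →
      |pcrFourier 0 0 a e + 1 + (1 / 4) * a ^ 2| ≤ C * a ^ 2 * (e ^ 2 + a) := by
  refine ⟨100, by norm_num, 1/8, by norm_num, ?_⟩
  rintro a e ⟨ha0, ha1⟩ ⟨he0, he1⟩
  have hπ := Real.pi_pos
  have hπ2 : (0:ℝ) < π^2 := by positivity
  have hrne : ∀ u : ℝ, rho e u ≠ 0 := by
    intro u
    have := Real.cos_le_one u
    have : (0:ℝ) < rho e u := by rw [rho]; nlinarith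
    exact ne_of_gt this
  -- continuity of the various pieces, jointly in (g, u)
  have c_rho : Continuous fun p : ℝ × ℝ => rho e p.2 := by
    simp only [rho]; fun_prop
  have c_cos : Continuous fun p : ℝ × ℝ => cospsi e p.2 p.1 := by
    simp only [cospsi]
    apply Continuous.sub
    · exact (Continuous.div (by fun_prop) c_rho (fun p => hrne p.2)).mul (by fun_prop)
    · exact (Continuous.div (by fun_prop) c_rho (fun p => hrne p.2)).mul (by fun_prop)
  have c_arg : Continuous fun p : ℝ × ℝ =>
      1 + (a * rho e p.2) ^ 2 - 2 * (a * rho e p.2) * cospsi e p.2 p.1 := by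
    exact (continuous_const.add ((continuous_const.mul c_rho).pow 2)).sub
      ((continuous_const.mul (continuous_const.mul c_rho)).mul c_cos)
  have c_inv : Continuous fun p : ℝ × ℝ =>
      (Real.sqrt (1 + (a * rho e p.2) ^ 2 - 2 * (a * rho e p.2) * cospsi e p.2 p.1))⁻¹ := by
    apply Continuous.inv₀ (Real.continuous_sqrt.comp c_arg)
    intro p
    exact ne_of_gt (Real.sqrt_pos.mpr (argpos a e p.2 p.1 ha0 ha1 he0 he1))
  have c_pr : Continuous fun p : ℝ × ℝ => perturb a e p.2 p.1 * rho e p.2 := by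
    simp only [perturb]
    exact (((continuous_const.mul c_rho).mul c_cos).sub c_inv).mul c_rho
  have c_rQ : Continuous fun p : ℝ × ℝ => rho e p.2 + Qf a e p.2 p.1 := by
    simp only [rho, Qf, Wf]; fun_prop
  have c_full : Continuous fun p : ℝ × ℝ =>
      perturb a e p.2 p.1 * rho e p.2 + rho e p.2 + Qf a e p.2 p.1 := by
    exact (c_pr.add (by simp only [rho]; fun_prop)).add (by simp only [Qf, Wf, rho]; fun_prop)
  -- integrability in u for fixed g
  have int_pr : ∀ g : ℝ, IntervalIntegrable (fun u => perturb a e u g * rho e u)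
      MeasureTheory.volume 0 (2*π) := fun g =>
    (c_pr.comp (Continuous.prodMk_right g)).intervalIntegrable 0 (2*π)
  have int_rQ : ∀ g : ℝ, IntervalIntegrable (fun u => rho e u + Qf a e u g)
      MeasureTheory.volume 0 (2*π) := fun g =>
    (c_rQ.comp (Continuous.prodMk_right g)).intervalIntegrable 0 (2*π)
  have int_full : ∀ g : ℝ, IntervalIntegrable
      (fun u => perturb a e u g * rho e u + rho e u + Qf a e u g)
      MeasureTheory.volume 0 (2*π) := fun g =>
    (c_full.comp (Continuous.prodMk_right g)).intervalIntegrable 0 (2*π)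
  set Fg : ℝ → ℝ :=
    fun g => ∫ u in (0:ℝ)..(2*π), (perturb a e u g * rho e u + rho e u + Qf a e u g) with hFgdef
  have hFgcont : Continuous Fg := by
    exact intervalIntegral.continuous_parametric_intervalIntegral_of_continuous'
      (f := fun g u => perturb a e u g * rho e u + rho e u + Qf a e u g) c_full 0 (2*π)
  have hFgb : ∀ g : ℝ, |Fg g| ≤ 100*a^3 * (2*π) := by
    intro g
    have hb := intervalIntegral.norm_integral_le_of_norm_le_const (C := 100*a^3)
      (f := fun u => perturb a e u g * rho e u + rho e u + Qf a e u g)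
      (a := (0:ℝ)) (b := 2*π)
      (fun u _ => by
        rw [Real.norm_eq_abs]
        exact pointwise_bound a e u g ha0 ha1 he0 he1)
    rw [Real.norm_eq_abs] at hb
    calc |Fg g| ≤ 100*a^3 * |2*π - 0| := hb
      _ = 100*a^3 * (2*π) := by
          rw [sub_zero, abs_of_nonneg (by positivity : (0:ℝ) ≤ 2*π)]
  have hsplit : ∀ g : ℝ, (∫ u in (0:ℝ)..(2*π), perturb a e u g * rho e u)
      = Fg g - (2*π + π*a^2/2*(1 - 6*e^2 + 15*e^2*Real.cos g^2)) := by
    intro g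
    have h1 : (∫ u in (0:ℝ)..(2*π), perturb a e u g * rho e u)
        = ∫ u in (0:ℝ)..(2*π), ((perturb a e u g * rho e u + rho e u + Qf a e u g)
            - (rho e u + Qf a e u g)) := by
      apply intervalIntegral.integral_congr
      intro u _; ring
    rw [h1, intervalIntegral.integral_sub (int_full g) (int_rQ g),
      inner_val a e g he0.le (by linarith)]
  have hT : (∫ g in (0:ℝ)..(2*π), ∫ u in (0:ℝ)..(2*π), perturb a e u g * rho e u)
      = (∫ g in (0:ℝ)..(2*π), Fg g) - (4*π^2 + π^2*a^2*(1 + 3/2*e^2)) := by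
    have h2 : (∫ g in (0:ℝ)..(2*π), ∫ u in (0:ℝ)..(2*π), perturb a e u g * rho e u)
        = ∫ g in (0:ℝ)..(2*π),
            (Fg g - (2*π + π*a^2/2*(1 - 6*e^2 + 15*e^2*Real.cos g^2))) := by
      apply intervalIntegral.integral_congr
      intro g _
      exact hsplit g
    rw [h2, intervalIntegral.integral_sub (hFgcont.intervalIntegrable 0 (2*π))
      ((by fun_prop : Continuous fun g : ℝ =>
        2*π + π*a^2/2*(1 - 6*e^2 + 15*e^2*Real.cos g^2)).intervalIntegrable 0 (2*π)),
      outer_val a e]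
  have hS : |∫ g in (0:ℝ)..(2*π), Fg g| ≤ 100*a^3*(2*π)*(2*π) := by
    have hb := intervalIntegral.norm_integral_le_of_norm_le_const (C := 100*a^3*(2*π))
      (f := Fg) (a := (0:ℝ)) (b := 2*π)
      (fun g _ => by rw [Real.norm_eq_abs]; exact hFgb g)
    rw [Real.norm_eq_abs] at hb
    calc |∫ g in (0:ℝ)..(2*π), Fg g| ≤ 100*a^3*(2*π) * |2*π - 0| := hb
      _ = 100*a^3*(2*π)*(2*π) := by
          rw [sub_zero, abs_of_nonneg (by positivity : (0:ℝ) ≤ 2*π)]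
  have hpcr : pcrFourier 0 0 a e = (1/(4*π^2)) *
      ((∫ g in (0:ℝ)..(2*π), Fg g) - (4*π^2 + π^2*a^2*(1 + 3/2*e^2))) := by
    rw [pcrFourier, if_pos ⟨rfl, rfl⟩, hT]
  set S := ∫ g in (0:ℝ)..(2*π), Fg g with hSdef
  have key : pcrFourier 0 0 a e + 1 + (1/4) * a^2 = S/(4*π^2) - 3/8*a^2*e^2 := by
    rw [hpcr]; field_simp; ring
  rw [key]
  have htri : |S/(4*π^2) - 3/8*a^2*e^2| ≤ |S|/(4*π^2) + 3/8*a^2*e^2 := by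
    have h1 := abs_add_le (S/(4*π^2)) (-(3/8*a^2*e^2))
    have h2 : |S/(4*π^2)| = |S|/(4*π^2) := by
      rw [abs_div, abs_of_pos (by positivity : (0:ℝ) < 4*π^2)]
    have h3 : |(-(3/8*a^2*e^2))| = 3/8*a^2*e^2 := by
      rw [abs_neg, abs_of_nonneg (by positivity)]
    calc |S/(4*π^2) - 3/8*a^2*e^2| = |S/(4*π^2) + -(3/8*a^2*e^2)| := by ring_nf
      _ ≤ |S/(4*π^2)| + |(-(3/8*a^2*e^2))| := abs_add_le _ _
      _ = |S|/(4*π^2) + 3/8*a^2*e^2 := by rw [h2, h3]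
  have hSb : |S|/(4*π^2) ≤ 100*a^3 := by
    rw [div_le_iff₀ (by positivity : (0:ℝ) < 4*π^2)]
    calc |S| ≤ 100*a^3*(2*π)*(2*π) := hS
      _ = 100*a^3*(4*π^2) := by ring
  have hae : (0:ℝ) ≤ a^2*e^2 := by positivity
  calc |S/(4*π^2) - 3/8*a^2*e^2| ≤ |S|/(4*π^2) + 3/8*a^2*e^2 := htri
    _ ≤ 100*a^3 + 3/8*a^2*e^2 := by linarith
    _ ≤ 100 * a^2 * (e^2 + a) := by nlinarith [hae]

end
end

section
/- Fix e ∈ [0,1) and integers n, m. Then for every u₀ ∈ ℝ, the Fourier series of the function (r/a)^n · e^{imf} in the mean anomaly converges absolutely and one has ρ(e,u₀)^n · E(e,u₀)^m = ∑_{k ∈ ℤ} X^{n,m}_k(e) · e^{i k ℓ(e,u₀)} (Giacaglia's relation), where the series over k ∈ ℤ converges absolutely. -/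
noncomputable section

namespace HansenAux

open Real Complex Set Function intervalIntegral
open scoped ContDiff

variable {e : ℝ}

lemma rho_pos (he0 : 0 ≤ e) (he1 : e < 1) (u : ℝ) : 0 < rho e u := by
  have h1 := Real.cos_le_one u
  have h2 := Real.neg_one_le_cos u
  unfold rho; nlinarith

lemma rhoC_ne (he0 : 0 ≤ e) (he1 : e < 1) (u : ℝ) : ((rho e u : ℝ) : ℂ) ≠ 0 :=
  Complex.ofReal_ne_zero.mpr (rho_pos he0 he1 u).ne'

lemma hasDerivAt_meanAnom (u : ℝ) : HasDerivAt (meanAnom e) (rho e u) u := by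
  exact (by simpa [meanAnom, rho, Pi.sub_def] using (hasDerivAt_id u).sub ((Real.hasDerivAt_sin u).const_mul e) :
    HasDerivAt (fun u => u - e * Real.sin u) (rho e u) u)

lemma meanAnom_strictMono (he0 : 0 ≤ e) (he1 : e < 1) : StrictMono (meanAnom e) :=
  strictMono_of_deriv_pos fun x => by
    rw [(hasDerivAt_meanAnom x).deriv]; exact rho_pos he0 he1 x

lemma meanAnom_continuous : Continuous (meanAnom e) :=
  continuous_iff_continuousAt.mpr fun x => (hasDerivAt_meanAnom x).continuousAt

lemma meanAnom_surjective (he0 : 0 ≤ e) : Function.Surjective (meanAnom e) := by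
  apply meanAnom_continuous.surjective
  · refine Filter.tendsto_atTop_mono (fun u : ℝ => ?_) (Filter.tendsto_atTop_add_const_right _ (-e) Filter.tendsto_id)
    have := Real.sin_le_one u; have := Real.neg_one_le_sin u
    simp only [meanAnom, id]; nlinarith
  · refine Filter.tendsto_atBot_mono (fun u : ℝ => ?_) (Filter.tendsto_atBot_add_const_right _ e Filter.tendsto_id)
    have := Real.sin_le_one u; have := Real.neg_one_le_sin u
    simp only [meanAnom, id]; nlinarith

lemma rho_per (x : ℝ) : rho e (x + 2 * π) = rho e x := by
  simp [rho, Real.cos_add_two_pi]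

lemma meanAnom_add (x : ℝ) : meanAnom e (x + 2 * π) = meanAnom e x + 2 * π := by
  simp [meanAnom, Real.sin_add_two_pi]; ring

lemma trueExp_per (x : ℝ) : trueExp e (x + 2 * π) = trueExp e x := by
  simp [trueExp, Real.cos_add_two_pi, Real.sin_add_two_pi]

lemma meanAnom_zero : meanAnom e 0 = 0 := by simp [meanAnom]

lemma meanAnom_two_pi : meanAnom e (2 * π) = 2 * π := by simp [meanAnom, Real.sin_two_pi]

lemma rho_refl (x : ℝ) : rho e (2 * π - x) = rho e x := by
  simp [rho, Real.cos_two_pi_sub]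

lemma meanAnom_refl (x : ℝ) : meanAnom e (2 * π - x) = 2 * π - meanAnom e x := by
  simp [meanAnom, Real.sin_two_pi_sub]; ring

lemma trueExp_refl (x : ℝ) :
    trueExp e (2 * π - x) = (starRingEnd ℂ) (trueExp e x) := by
  unfold trueExp
  rw [Real.cos_two_pi_sub, Real.sin_two_pi_sub, map_div₀]
  rw [map_add, map_mul, Complex.conj_ofReal, Complex.conj_ofReal, Complex.conj_ofReal,
    Complex.conj_I]
  push_cast
  ring

lemma normSq_num (he0 : 0 ≤ e) (he1 : e < 1) (u : ℝ) :
    Complex.normSq (((Real.cos u - e : ℝ) : ℂ) +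
      ((Real.sqrt (1 - e ^ 2) * Real.sin u : ℝ) : ℂ) * Complex.I) = rho e u ^ 2 := by
  have h1 : Real.sqrt (1 - e ^ 2) ^ 2 = 1 - e ^ 2 := by
    rw [Real.sq_sqrt]; nlinarith
  have key : (Real.cos u - e) ^ 2 + (Real.sqrt (1 - e ^ 2) * Real.sin u) ^ 2
      = rho e u ^ 2 := by
    rw [mul_pow, h1]
    have := Real.sin_sq_add_cos_sq u
    unfold rho; nlinarith [Real.sin_sq_add_cos_sq u]
  rw [← key]
  exact Complex.normSq_add_mul_I _ _

lemma trueExp_ne_zero (he0 : 0 ≤ e) (he1 : e < 1) (u : ℝ) : trueExp e u ≠ 0 := by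
  unfold trueExp
  apply div_ne_zero
  · intro h
    have := normSq_num (e := e) he0 he1 u
    rw [h, map_zero] at this
    exact absurd this.symm (pow_pos (rho_pos he0 he1 u) 2).ne'
  · exact rhoC_ne he0 he1 u

lemma contDiff_rho : ContDiff ℝ ∞ (rho e) :=
  contDiff_const.sub (contDiff_const.mul Real.contDiff_cos)

lemma contDiff_rhoC : ContDiff ℝ ∞ (fun v => ((rho e v : ℝ) : ℂ)) :=
  Complex.ofRealCLM.contDiff.comp contDiff_rho

lemma contDiff_trueExp (he0 : 0 ≤ e) (he1 : e < 1) : ContDiff ℝ ∞ (trueExp e) := by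
  unfold trueExp
  simp only [div_eq_mul_inv]
  apply ContDiff.mul
  · exact (Complex.ofRealCLM.contDiff.comp
      (Real.contDiff_cos.sub contDiff_const)).add
      ((Complex.ofRealCLM.contDiff.comp (contDiff_const.mul Real.contDiff_sin)).mul contDiff_const)
  · exact ContDiff.inv (Complex.ofRealCLM.contDiff.comp
      (contDiff_const.sub (contDiff_const.mul Real.contDiff_cos))) (fun x => rhoC_ne he0 he1 x)

lemma ContDiff.zpowC {f : ℝ → ℂ} (hf : ContDiff ℝ ∞ f) (h0 : ∀ x, f x ≠ 0) (m : ℤ) :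
    ContDiff ℝ ∞ (fun x => f x ^ m) := by
  cases m with
  | ofNat k => simpa [zpow_natCast] using hf.pow k
  | negSucc k =>
      simp only [zpow_negSucc]
      exact (hf.pow (k + 1)).inv fun x => pow_ne_zero _ (h0 x)

lemma contDiff_F (he0 : 0 ≤ e) (he1 : e < 1) (n m : ℤ) :
    ContDiff ℝ ∞ (fun v => ((rho e v : ℝ) : ℂ) ^ n * trueExp e v ^ m) :=
  (ContDiff.zpowC contDiff_rhoC (rhoC_ne he0 he1) n).mul
    (ContDiff.zpowC (contDiff_trueExp he0 he1) (trueExp_ne_zero he0 he1) m)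

end HansenAux

open HansenAux Real Complex Set Function intervalIntegral
open scoped ContDiff

/-- Giacaglia's relation, (r/a)^n e^{imf} = ∑_{k∈ℤ} X^{n,m}_k(e) e^{ikℓ},
with absolute convergence of the Fourier series in the mean anomaly. -/
theorem hansen_giacaglia (e : ℝ) (he : e ∈ Set.Ico (0:ℝ) 1) (n m : ℤ) (u₀ : ℝ) :
    Summable (fun k : ℤ => |hansen n m k e|) ∧
    ((rho e u₀ ^ n : ℝ) : ℂ) * trueExp e u₀ ^ m =
      ∑' k : ℤ, (hansen n m k e : ℂ) *
        Complex.exp (Complex.I * (k : ℂ) * ((meanAnom e u₀ : ℝ) : ℂ)) := by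
  obtain ⟨he0, he1⟩ := he
  have hπ : (0:ℝ) < π := Real.pi_pos
  have hab : (0:ℝ) < 2 * π := by positivity
  haveI : Fact (0 < 2 * π) := ⟨hab⟩
  -- Kepler inverse
  have hmono := meanAnom_strictMono he0 he1
  have hsurj := meanAnom_surjective (e := e) he0
  set K : ℝ ≃o ℝ := StrictMono.orderIsoOfSurjective (meanAnom e) hmono hsurj with hK
  set U : ℝ → ℝ := fun ℓ => K.symm ℓ with hUdef
  have hKapp : ∀ v, K v = meanAnom e v := fun v => rfl
  have hLU : ∀ ℓ, meanAnom e (U ℓ) = ℓ := fun ℓ => by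
    have := K.apply_symm_apply ℓ; rwa [hKapp] at this
  have hUL : ∀ v, U (meanAnom e v) = v := fun v => by
    have := K.symm_apply_apply v; rwa [hKapp] at this
  have hUcont : Continuous U := K.symm.continuous
  have hUd : ∀ ℓ, HasDerivAt U (rho e (U ℓ))⁻¹ ℓ := fun ℓ =>
    HasDerivAt.of_local_left_inverse hUcont.continuousAt (hasDerivAt_meanAnom (U ℓ))
      (rho_pos he0 he1 _).ne' (Filter.Eventually.of_forall hLU)
  have hU0 : U 0 = 0 := by have := hUL 0; rwa [meanAnom_zero] at this
  have hU2π : U (2 * π) = 2 * π := by have := hUL (2 * π); rwa [meanAnom_two_pi] at this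
  have hUadd : ∀ ℓ, U (ℓ + 2 * π) = U ℓ + 2 * π := fun ℓ => by
    apply hmono.injective
    rw [hLU, meanAnom_add, hLU]
  -- smooth data
  set F : ℝ → ℂ := fun v => ((rho e v : ℝ) : ℂ) ^ n * trueExp e v ^ m with hFdef
  have hFc : ContDiff ℝ ∞ F := contDiff_F he0 he1 n m
  have h1inf : (1 : WithTop ℕ∞) ≤ ∞ := by exact_mod_cast le_top
  have hFd : Differentiable ℝ F := hFc.differentiable (by simp)
  have hF₁c : ContDiff ℝ ∞ (deriv F) := (contDiff_infty_iff_deriv.mp hFc).2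
  set G : ℝ → ℂ := fun v => (rho e v)⁻¹ • deriv F v with hGdef
  have hGc : ContDiff ℝ ∞ G :=
    (contDiff_rho.inv fun x => (rho_pos he0 he1 x).ne').smul hF₁c
  have hGd : Differentiable ℝ G := hGc.differentiable (by simp)
  have hG₁c : ContDiff ℝ ∞ (deriv G) := (contDiff_infty_iff_deriv.mp hGc).2
  set H : ℝ → ℂ := fun v => (rho e v)⁻¹ • deriv G v with hHdef
  have hHcont : Continuous H :=
    ((contDiff_rho.inv fun x => (rho_pos he0 he1 x).ne').smul hG₁c).continuous
  set g : ℝ → ℂ := fun ℓ => F (U ℓ) with hgdef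
  have hgcont : Continuous g := hFc.continuous.comp hUcont
  have hgd : ∀ ℓ, HasDerivAt g (G (U ℓ)) ℓ := fun ℓ => by
    simpa [hgdef, hGdef, Function.comp_def] using HasDerivAt.scomp (h := U) (x := ℓ) (hFd (U ℓ)).hasDerivAt (hUd ℓ)
  have hg'd : ∀ ℓ, HasDerivAt (fun x => G (U x)) (H (U ℓ)) ℓ := fun ℓ => by
    simpa [hHdef, Function.comp_def] using HasDerivAt.scomp (h := U) (x := ℓ) (hGd (U ℓ)).hasDerivAt (hUd ℓ)
  -- periodicity
  have hFper : Function.Periodic F (2 * π) := fun x => by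
    simp only [hFdef, rho_per, trueExp_per]
  have hF₁per : Function.Periodic (deriv F) (2 * π) := fun x => by
    have hEq : F = fun y => F (y + 2 * π) := funext fun y => (hFper y).symm
    conv_rhs => rw [hEq]
    rw [deriv_comp_add_const]
  have hGper : Function.Periodic G (2 * π) := fun x => by
    simp only [hGdef]; rw [rho_per, hF₁per x]
  have hgper : Function.Periodic g (2 * π) := fun x => by
    simp only [hgdef]; rw [hUadd x, hFper (U x)]
  have hg2π : g (2 * π) = g 0 := by simpa using hgper 0
  have hGU2π : G (U (2 * π)) = G (U 0) := by
    rw [hU2π, hU0]; simpa using hGper 0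
  -- fourier generalities
  have hfour : ∀ (j : ℤ) (x : ℝ),
      (fourier j ((x : ℝ) : AddCircle (2 * π)) : ℂ) = Complex.exp (Complex.I * j * x) := by
    intro j x
    rw [fourier_coe_apply]
    congr 1
    have hπC : (π : ℂ) ≠ 0 := Complex.ofReal_ne_zero.mpr Real.pi_ne_zero
    push_cast
    field_simp
  have step : ∀ (f f' : ℝ → ℂ), f (2 * π) = f 0 → (∀ x, HasDerivAt f (f' x) x) →
      Continuous f' → ∀ k : ℤ, k ≠ 0 →
      fourierCoeffOn hab f k = 1 / (Complex.I * k) * fourierCoeffOn hab f' k := by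
    intro f f' hper hd hc k hk
    rw [fourierCoeffOn_of_hasDerivAt hab hk (fun x _ => hd x)
      (hc.intervalIntegrable 0 (2 * π))]
    rw [hper, sub_self, mul_zero, zero_sub]
    have hπC : (π : ℂ) ≠ 0 := Complex.ofReal_ne_zero.mpr Real.pi_ne_zero
    have hkC : (k : ℂ) ≠ 0 := Int.cast_ne_zero.mpr hk
    push_cast
    field_simp
    ring
  have coeff_bound : ∀ (f : ℝ → ℂ), Continuous f → ∀ k : ℤ,
      ‖fourierCoeffOn hab f k‖ ≤ (1 / (2 * π)) * ∫ x in (0:ℝ)..(2 * π), ‖f x‖ := by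
    intro f hf k
    rw [fourierCoeffOn_eq_integral, norm_smul]
    have h1 : ‖(1 / (2 * π - 0) : ℝ)‖ = 1 / (2 * π) := by
      rw [sub_zero, Real.norm_eq_abs, abs_of_pos (by positivity)]
    rw [h1]
    apply mul_le_mul_of_nonneg_left _ (by positivity)
    refine (intervalIntegral.norm_integral_le_integral_norm hab.le).trans
      (le_of_eq (intervalIntegral.integral_congr fun x _ => ?_))
    rw [norm_smul, show ‖(fourier (-k) ((x : ℝ) : AddCircle (2 * π - 0)) : ℂ)‖ = 1 from
      Circle.norm_coe _, one_mul]
  -- coefficients of g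
  set c : ℤ → ℂ := fourierCoeffOn hab g with hcdef
  have hGUcont : Continuous fun x => G (U x) := hGc.continuous.comp hUcont
  have hHUcont : Continuous fun x => H (U x) := hHcont.comp hUcont
  set C : ℝ := (1 / (2 * π)) * ∫ x in (0:ℝ)..(2 * π), ‖H (U x)‖ with hCdef
  have hC0 : 0 ≤ C := by
    rw [hCdef]
    have h0 : 0 ≤ ∫ x in (0:ℝ)..(2 * π), ‖H (U x)‖ :=
      intervalIntegral.integral_nonneg hab.le (fun u _ => norm_nonneg _)
    positivity
  have hcb : ∀ k : ℤ, k ≠ 0 → ‖c k‖ ≤ C * (1 / (k : ℝ) ^ 2) := by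
    intro k hk
    have h1 : c k = 1 / (Complex.I * k) * (1 / (Complex.I * k) *
        fourierCoeffOn hab (fun x => H (U x)) k) := by
      rw [hcdef, step g (fun x => G (U x)) hg2π hgd hGUcont k hk,
        step (fun x => G (U x)) (fun x => H (U x)) hGU2π hg'd hHUcont k hk]
    have hnrm : ‖(1 / (Complex.I * (k : ℂ)) : ℂ)‖ = 1 / |(k : ℝ)| := by
      rw [norm_div, norm_one, norm_mul, Complex.norm_I, one_mul]
      norm_num [Complex.norm_intCast]
    have h2 := coeff_bound (fun x => H (U x)) hHUcont k
    have habs : (0:ℝ) < |(k : ℝ)| := by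
      simp only [abs_pos, ne_eq, Int.cast_eq_zero]; exact hk
    calc ‖c k‖ = (1 / |(k:ℝ)|) * ((1 / |(k:ℝ)|) * ‖fourierCoeffOn hab (fun x => H (U x)) k‖) := by
          rw [h1, norm_mul, norm_mul, hnrm]
      _ ≤ (1 / |(k:ℝ)|) * ((1 / |(k:ℝ)|) * C) := by
          apply mul_le_mul_of_nonneg_left _ (by positivity)
          exact mul_le_mul_of_nonneg_left h2 (by positivity)
      _ = C * (1 / (k : ℝ) ^ 2) := by
          rw [show ((k:ℝ))^2 = |(k:ℝ)|^2 from (_root_.sq_abs _).symm]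
          ring
  have hsummable : Summable fun k : ℤ => ‖c k‖ := by
    have hs1 : Summable fun k : ℤ => C * (1 / (k : ℝ) ^ 2) :=
      (summable_one_div_int_pow.mpr one_lt_two).mul_left C
    have hs2 : Summable fun k : ℤ => if k = 0 then ‖c 0‖ else 0 :=
      summable_of_ne_finset_zero (s := ({0} : Finset ℤ)) (fun b hb => by
        simp only [Finset.mem_singleton] at hb; simp [hb])
    refine Summable.of_nonneg_of_le (fun k => norm_nonneg _) (fun k => ?_) (hs1.add hs2)
    by_cases hk : k = 0
    · simp [hk]
    · have := hcb k hk
      simp only [Pi.add_apply, hk, if_false, add_zero]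
      exact this
  -- change of variables: coefficients as integrals in the eccentric anomaly
  set W : ℤ → ℝ → ℂ := fun k x => ((rho e x : ℝ) : ℂ) ^ (n + 1) *
      (trueExp e x ^ m * Complex.exp (-(Complex.I * k * ((meanAnom e x : ℝ) : ℂ)))) with hWdef
  have hWcont : ∀ k : ℤ, Continuous (W k) := by
    intro k
    apply Continuous.mul
    · exact (ContDiff.zpowC contDiff_rhoC (rhoC_ne he0 he1) (n + 1)).continuous
    · apply Continuous.mul
      · exact (ContDiff.zpowC (contDiff_trueExp he0 he1) (trueExp_ne_zero he0 he1) m).continuous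
      · exact Complex.continuous_exp.comp
          ((continuous_const.mul (Complex.continuous_ofReal.comp meanAnom_continuous)).neg)
  have hWint : ∀ k : ℤ, IntervalIntegrable (W k) MeasureTheory.volume 0 (2 * π) :=
    fun k => (hWcont k).intervalIntegrable _ _
  have hchange : ∀ k : ℤ, c k = (1 / (2 * π) : ℝ) • ∫ x in (0:ℝ)..(2 * π), W k x := by
    intro k
    rw [hcdef, fourierCoeffOn_eq_integral]
    rw [show (2 * π - 0 : ℝ) = 2 * π from sub_zero _]
    congr 1
    refine Eq.trans (intervalIntegral.integral_congr
      (g := fun x : ℝ => Complex.exp (Complex.I * ((-k : ℤ) : ℂ) * (x : ℂ)) * g x)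
      fun x _ => ?_) ?_
    · rw [smul_eq_mul, hfour (-k) x]
    have hcv := intervalIntegral.integral_comp_smul_deriv
      (f := meanAnom e) (f' := rho e) (a := 0) (b := 2 * π)
      (g := fun y : ℝ => Complex.exp (Complex.I * ((-k : ℤ) : ℂ) * (y : ℂ)) * g y)
      (fun x _ => hasDerivAt_meanAnom x) contDiff_rho.continuous.continuousOn
      ((Complex.continuous_exp.comp (continuous_const.mul Complex.continuous_ofReal)).mul hgcont)
    rw [meanAnom_zero, meanAnom_two_pi] at hcv
    rw [← hcv]
    apply intervalIntegral.integral_congr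
    intro x _
    show rho e x • (Complex.exp (Complex.I * ((-k : ℤ) : ℂ) * ((meanAnom e x : ℝ) : ℂ))
        * g (meanAnom e x)) = W k x
    rw [hgdef]
    simp only []
    rw [hUL x, hWdef, hFdef]
    simp only []
    rw [Complex.real_smul, zpow_add_one₀ (rhoC_ne he0 he1 x)]
    rw [show Complex.I * ((-k : ℤ) : ℂ) * ((meanAnom e x : ℝ) : ℂ)
        = -(Complex.I * k * ((meanAnom e x : ℝ) : ℂ)) by push_cast; ring]
    ring
  -- reflection symmetry: the coefficients are real
  have hWrefl : ∀ (k : ℤ) (x : ℝ), W k (2 * π - x) = (starRingEnd ℂ) (W k x) := by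
    intro k x
    rw [hWdef]
    simp only []
    rw [rho_refl, trueExp_refl, meanAnom_refl]
    rw [map_mul, map_mul]
    congr 1
    · rw [← Complex.ofReal_zpow, Complex.conj_ofReal]
    congr 1
    · exact (map_zpow₀ (starRingEnd ℂ) _ m).symm
    · rw [show -(Complex.I * k * ((2 * π - meanAnom e x : ℝ) : ℂ))
          = ((-k : ℤ) : ℂ) * (2 * π * Complex.I) + Complex.I * k * ((meanAnom e x : ℝ) : ℂ) by
        push_cast; ring]
      rw [Complex.exp_add, Complex.exp_int_mul_two_pi_mul_I, one_mul]
      rw [← Complex.exp_conj]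
      congr 1
      rw [map_neg, map_mul, map_mul, Complex.conj_I, Complex.conj_ofReal, map_intCast]
      ring
  have hWim : ∀ k : ℤ, (∫ x in (0:ℝ)..(2 * π), (W k x).im) = 0 := by
    intro k
    have h1 : ∀ x : ℝ, (W k (2 * π - x)).im = -(W k x).im := fun x => by
      rw [hWrefl k x, Complex.conj_im]
    have h2 := intervalIntegral.integral_comp_sub_left
      (a := (0:ℝ)) (b := 2 * π) (fun x => (W k x).im) (2 * π)
    simp only [h1] at h2
    rw [intervalIntegral.integral_neg] at h2
    norm_num at h2
    linarith
  have hWre : ∀ k : ℤ, (∫ x in (0:ℝ)..(2 * π), W k x)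
      = (((∫ x in (0:ℝ)..(2 * π), (W k x).re) : ℝ) : ℂ) := by
    intro k
    have hre := Complex.reCLM.intervalIntegral_comp_comm (hWint k)
    have him := Complex.imCLM.intervalIntegral_comp_comm (hWint k)
    simp only [Complex.reCLM_apply, Complex.imCLM_apply] at hre him
    apply Complex.ext
    · rw [Complex.ofReal_re]; exact hre.symm
    · rw [Complex.ofReal_im, ← him]; exact hWim k
  have hansen_eq : ∀ k : ℤ, ((hansen n m k e : ℝ) : ℂ) = c k := by
    intro k
    rw [hchange k, hWre k, Complex.real_smul]
    unfold hansen
    have hint : (∫ u in (0:ℝ)..(2 * Real.pi), rho e u ^ (n + 1) *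
        (trueExp e u ^ m * Complex.exp (-(Complex.I * k * ((meanAnom e u : ℝ) : ℂ)))).re)
        = ∫ x in (0:ℝ)..(2 * π), (W k x).re := by
      apply intervalIntegral.integral_congr
      intro x _
      rw [hWdef]
      simp only []
      rw [← Complex.ofReal_zpow, Complex.re_ofReal_mul]
    rw [hint]
    push_cast
    ring
  -- the periodic lift and the convergence theorem
  have hf₀cont : Continuous hgper.lift := hgcont.quotient_liftOn' _
  set fK : C(AddCircle (2 * π), ℂ) := ⟨hgper.lift, hf₀cont⟩ with hfKdef
  have hcoeff : ∀ k : ℤ, fourierCoeff (⇑fK) k = c k := by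
    intro k
    rw [fourierCoeff_eq_intervalIntegral (⇑fK) k 0, hcdef, fourierCoeffOn_eq_integral]
    rw [show (2 * π - 0 : ℝ) = 2 * π from sub_zero _,
      show (0 + 2 * π : ℝ) = 2 * π from zero_add _]
    congr 1
  have hsum0 : Summable (fourierCoeff (⇑fK)) := by
    apply Summable.of_norm
    have heq : (fun k : ℤ => ‖fourierCoeff (⇑fK) k‖) = fun k => ‖c k‖ :=
      funext fun k => by rw [hcoeff k]
    rw [heq]; exact hsummable
  have hps := has_pointwise_sum_fourier_series_of_summable hsum0
      ((meanAnom e u₀ : ℝ) : AddCircle (2 * π))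
  have hval : fK ((meanAnom e u₀ : ℝ) : AddCircle (2 * π))
      = ((rho e u₀ ^ n : ℝ) : ℂ) * trueExp e u₀ ^ m := by
    rw [hfKdef]
    simp only [ContinuousMap.coe_mk]
    rw [Function.Periodic.lift_coe]
    rw [hgdef]
    simp only []
    rw [hUL u₀, hFdef]
    simp only []
    rw [Complex.ofReal_zpow]
  constructor
  · have hfn : (fun k : ℤ => |hansen n m k e|) = fun k => ‖c k‖ := funext fun k => by
      rw [← hansen_eq k, Complex.norm_real, Real.norm_eq_abs]
    rw [hfn]; exact hsummable
  · rw [← hval]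
    have h3 : (fun k : ℤ =>
          fourierCoeff (⇑fK) k • (fourier k ((meanAnom e u₀ : ℝ) : AddCircle (2 * π)) : ℂ))
        = fun k : ℤ => (hansen n m k e : ℂ) *
            Complex.exp (Complex.I * k * ((meanAnom e u₀ : ℝ) : ℂ)) := funext fun k => by
      rw [hcoeff k, ← hansen_eq k, smul_eq_mul, hfour k (meanAnom e u₀)]
    rw [h3] at hps
    exact hps.tsum_eq.symm

end
end
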